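/- A 2-dimensional zonotope (zonogon) that is the Minkowski sum of n segments with pairwise non-collinear direction vectors has exactly 2n vertices. -/

import Mathlib

open Pointwise
open scoped Classical

noncomputable section

abbrev E3 := EuclideanSpace ℝ (Fin 3)

def IsPolytope {E : Type*} [NormedAddCommGroup E] [InnerProductSpace ℝ E] (P : Set E) : Prop :=
  ∃ S : Finset E, S.Nonempty ∧ P = convexHull ℝ (S : Set E)

def IsFace {E : Type*} [NormedAddCommGroup E] [InnerProductSpace ℝ E] (P F : Set E) : Prop :=
  F.Nonempty ∧ IsExposed ℝ P F

def faceDim {E : Type*} [NormedAddCommGroup E] [InnerProductSpace ℝ E] (F : Set E) : ℕ :=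
  Module.finrank ℝ (vectorSpan ℝ F)

def IsEdge (P e : Set E3) : Prop := IsFace P e ∧ faceDim e = 1

def IsFacet (P F : Set E3) : Prop := IsFace P F ∧ faceDim F = 2

def normalCone (P F : Set E3) : Set E3 :=
  {u | ∀ x ∈ P, ∀ y ∈ F, (inner ℝ u x : ℝ) ≤ (inner ℝ u y : ℝ)}

def aggCone (P : Set E3) (u : E3) : Set E3 :=
  ⋃ F ∈ {F : Set E3 | IsFace P F ∧
      Module.finrank ℝ (Submodule.span ℝ (normalCone P F)) = 2 ∧
      normalCone P F ⊆ ((ℝ ∙ u)ᗮ : Set E3)},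
    normalCone P F

def firstNonzeroPos (u : E3) : Prop := ∃ i : Fin 3, 0 < u i ∧ ∀ j < i, u j = 0

def IsEdgeDirection (P : Set E3) (u : E3) : Prop :=
  ‖u‖ = 1 ∧ firstNonzeroPos u ∧ ∃ e : Set E3, IsEdge P e ∧ vectorSpan ℝ e = ℝ ∙ u

def proj (H : Submodule ℝ E3) (x : E3) : E3 := (H.orthogonalProjection x : E3)

def IsPolygonWith (Q : Set E3) (k : ℕ) : Prop :=
  IsPolytope Q ∧ Module.finrank ℝ (vectorSpan ℝ Q) = 2 ∧ (Set.extremePoints ℝ Q).ncard = k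

def IsKEquiprojective (P : Set E3) (k : ℕ) : Prop :=
  ∀ H : Submodule ℝ E3, Module.finrank ℝ H = 2 →
    (∀ F : Set E3, IsFacet P F → ¬ (Hᗮ ≤ vectorSpan ℝ F)) →
    IsPolygonWith (proj H '' P) k

def IsEquiprojective (P : Set E3) : Prop := ∃ k, IsKEquiprojective P k

def mult (P : Set E3) (u : E3) : ℕ :=
  if aggCone P u = ((ℝ ∙ u)ᗮ : Set E3) then 2 else 1

def kappa (P : Set E3) : ℕ := ∑ᶠ u ∈ {u : E3 | IsEdgeDirection P u}, mult P u

def PairwiseNoncollinear {E : Type*} [AddCommGroup E] [Module ℝ E] (G : Finset E) : Prop :=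
  (∀ g ∈ G, g ≠ 0) ∧ ∀ g ∈ G, ∀ g' ∈ G, g ≠ g' → ∀ c : ℝ, g' ≠ c • g

def zonotope {E : Type*} [NormedAddCommGroup E] [InnerProductSpace ℝ E] (G : Finset E) : Set E :=
  ∑ g ∈ G, segment ℝ (0 : E) g

open scoped RealInnerProductSpace

abbrev E2 := EuclideanSpace ℝ (Fin 2)

/-- `u` realizes sign set `S` on generators `G`. -/
def Rzs (G : Finset E2) (u : E2) (S : Finset E2) : Prop :=
  ∀ g ∈ G, (g ∈ S → 0 < ⟪u, g⟫) ∧ (g ∉ S → ⟪u, g⟫ < 0)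

/-- The set of realizable sign sets. -/
def RSet (G : Finset E2) : Finset (Finset E2) :=
  G.powerset.filter (fun S => ∃ u, Rzs G u S)

lemma mem_RSet {G S : Finset E2} : S ∈ RSet G ↔ S ⊆ G ∧ ∃ u, Rzs G u S := by
  simp [RSet, Finset.mem_powerset]

lemma inner_E2 (x y : E2) : ⟪x, y⟫ = x 0 * y 0 + x 1 * y 1 := by
  simp [PiLp.inner_apply, Fin.sum_univ_two, RCLike.inner_apply, conj_trivial]; ring

def rot (a : E2) : E2 := WithLp.toLp 2 ![-(a 1), a 0]

lemma inner_rot_self (a : E2) : ⟪rot a, a⟫ = 0 := by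
  rw [inner_E2]; show -(a 1) * a 0 + a 0 * a 1 = 0; ring

lemma rot_ne_zero {a : E2} (ha : a ≠ 0) : rot a ≠ 0 := by
  intro hc
  apply ha
  have h0 : rot a 0 = 0 := by rw [hc]; rfl
  have h1 : rot a 1 = 0 := by rw [hc]; rfl
  have ha1 : a 1 = 0 := by simpa [rot] using h0
  have ha0 : a 0 = 0 := by simpa [rot] using h1
  ext i; fin_cases i <;> simp [ha0, ha1]

/-- In dimension 2, two vectors orthogonal to the same nonzero vector are collinear. -/
lemma collinear_of_perp {u a g : E2} (hu : u ≠ 0) (ha : a ≠ 0)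
    (h1 : ⟪u, a⟫ = 0) (h2 : ⟪u, g⟫ = 0) : ∃ c : ℝ, g = c • a := by
  rw [inner_E2] at h1 h2
  have hcoord : u 0 ≠ 0 ∨ u 1 ≠ 0 := by
    by_contra hc
    push_neg at hc
    exact hu (by ext i; fin_cases i <;> simp [hc.1, hc.2])
  have key : ∀ (u0 u1 a0 a1 g0 g1 : ℝ), (u0 ≠ 0 ∨ u1 ≠ 0) → ¬(a0 = 0 ∧ a1 = 0) →
      u0 * a0 + u1 * a1 = 0 → u0 * g0 + u1 * g1 = 0 →
      ∃ c : ℝ, g0 = c * a0 ∧ g1 = c * a1 := by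
    intro u0 u1 a0 a1 g0 g1 hu0 ha0 e1 e2
    rcases hu0 with h | h
    · -- u0 ≠ 0 : a0 = -u1 a1/u0, g0 = -u1 g1/u0
      have ea : a0 = -(u1 * a1) / u0 := by field_simp; linarith
      have eg : g0 = -(u1 * g1) / u0 := by field_simp; linarith
      have ha1 : a1 ≠ 0 := by
        intro hz; exact ha0 ⟨by rw [ea, hz]; ring, hz⟩
      exact ⟨g1 / a1, by rw [ea, eg]; field_simp, by field_simp⟩
    · have ea : a1 = -(u0 * a0) / u1 := by field_simp; linarith
      have eg : g1 = -(u0 * g0) / u1 := by field_simp; linarith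
      have ha1 : a0 ≠ 0 := by
        intro hz; exact ha0 ⟨hz, by rw [ea, hz]; ring⟩
      exact ⟨g0 / a0, by field_simp, by rw [ea, eg]; field_simp⟩
  have haz : ¬(a 0 = 0 ∧ a 1 = 0) := by
    rintro ⟨h0, h1⟩
    exact ha (by ext i; fin_cases i <;> simp [h0, h1])
  obtain ⟨c, hc0, hc1⟩ := key (u 0) (u 1) (a 0) (a 1) (g 0) (g 1) hcoord haz h1 h2
  exact ⟨c, by ext i; fin_cases i <;> simpa [hc0, hc1]⟩

/-- Perturbation: small perturbations of `u` preserve the realized sign set. -/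
lemma rzs_perturb {G : Finset E2} {u : E2} {S : Finset E2} (h : Rzs G u S) (a : E2) :
    ∃ ε : ℝ, 0 < ε ∧ ∀ t : ℝ, |t| ≤ ε → Rzs G (u + t • a) S := by
  rcases G.eq_empty_or_nonempty with rfl | hne
  · exact ⟨1, one_pos, fun t _ g hg => absurd hg (Finset.notMem_empty g)⟩
  · set δ : ℝ := G.inf' hne fun g => |⟪u, g⟫|
    set M : ℝ := G.sup' hne fun g => |⟪a, g⟫|
    have hδ : 0 < δ := by
      rw [Finset.lt_inf'_iff]
      intro g hg
      rcases h g hg with ⟨h1, h2⟩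
      by_cases hgS : g ∈ S
      · exact abs_pos.2 (ne_of_gt (h1 hgS))
      · exact abs_pos.2 (ne_of_lt (h2 hgS))
    have hM : 0 ≤ M :=
      le_trans (abs_nonneg _) (Finset.le_sup' (fun g => |⟪a, g⟫|) hne.choose_spec)
    refine ⟨δ / (M + 1), by positivity, fun t ht g hg => ?_⟩
    have hbound : |t * ⟪a, g⟫| < |⟪u, g⟫| := by
      have h1 : |⟪a, g⟫| ≤ M := Finset.le_sup' (fun g => |⟪a, g⟫|) hg
      have h2 : δ ≤ |⟪u, g⟫| := Finset.inf'_le (fun g => |⟪u, g⟫|) hg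
      calc |t * ⟪a, g⟫| = |t| * |⟪a, g⟫| := abs_mul _ _
        _ ≤ (δ / (M + 1)) * M := by
            apply mul_le_mul ht h1 (abs_nonneg _) (le_of_lt (by positivity))
        _ < δ := by
            rw [div_mul_eq_mul_div, div_lt_iff₀ (by positivity)]
            nlinarith
        _ ≤ |⟪u, g⟫| := h2
    have hin : ⟪u + t • a, g⟫ = ⟪u, g⟫ + t * ⟪a, g⟫ := by
      rw [inner_add_left, real_inner_smul_left]
    rcases h g hg with ⟨h1, h2⟩
    constructor
    · intro hgS
      have h1' := h1 hgS
      have habs : |⟪u, g⟫| = ⟪u, g⟫ := abs_of_pos h1'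
      have hb := abs_lt.1 hbound
      rw [habs] at hb
      rw [hin]; linarith [hb.1]
    · intro hgS
      have h2' := h2 hgS
      have habs : |⟪u, g⟫| = -⟪u, g⟫ := abs_of_neg h2'
      have hb := abs_lt.1 hbound
      rw [habs] at hb
      rw [hin]; linarith [hb.2]

lemma inner_self_pos' {x : E2} (h : x ≠ 0) : 0 < ⟪x, x⟫ := by
  rw [real_inner_self_eq_norm_sq]
  have : 0 < ‖x‖ := norm_pos_iff.2 h
  positivity

def PNC {E : Type*} [AddCommGroup E] [Module ℝ E] (G : Finset E) : Prop :=
  (∀ g ∈ G, g ≠ 0) ∧ ∀ g ∈ G, ∀ g' ∈ G, g ≠ g' → ∀ c : ℝ, g' ≠ c • g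

lemma PNC.subset {G G' : Finset E2} (hsub : G ⊆ G') (h : PNC G') : PNC G :=
  ⟨fun g hg => h.1 g (hsub hg),
   fun g hg g' hg' hne c => h.2 g (hsub hg) g' (hsub hg') hne c⟩

lemma RSet_card : ∀ G : Finset E2, G.Nonempty → PNC G → (RSet G).card = 2 * G.card := by
  intro G
  induction G using Finset.induction_on with
  | empty => intro hne; exact absurd rfl (Finset.nonempty_iff_ne_empty.1 hne)
  | @insert a G ha ih =>
    intro _ hnc
    have hancol := hnc
    have haz : a ≠ 0 := hnc.1 a (Finset.mem_insert_self a G)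
    rcases G.eq_empty_or_nonempty with rfl | hGne
    · -- singleton case
      have h1 : RSet {a} = {∅, {a}} := by
        apply Finset.ext
        intro S
        simp only [Finset.mem_insert, Finset.mem_singleton, mem_RSet]
        constructor
        · rintro ⟨hsub, -⟩
          exact Finset.subset_singleton_iff.1 hsub
        · rintro (rfl | rfl)
          · refine ⟨Finset.empty_subset _, -a, fun g hg => ?_⟩
            rw [Finset.mem_singleton] at hg
            subst hg
            refine ⟨fun hc => absurd hc (Finset.notMem_empty _), fun _ => ?_⟩
            rw [inner_neg_left, neg_lt, neg_zero]
            exact inner_self_pos' haz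
          · refine ⟨le_refl _, a, fun g hg => ?_⟩
            rw [Finset.mem_singleton] at hg
            subst hg
            exact ⟨fun _ => inner_self_pos' haz, fun hc => absurd (Finset.mem_singleton_self _) hc⟩
      rw [show (insert a (∅:Finset E2)) = {a} by simp, h1]
      rw [Finset.card_insert_of_notMem (by simp [(Finset.singleton_ne_empty a).symm]),
        Finset.card_singleton, Finset.card_singleton]
    · -- inductive case
      have hGnc : PNC G := PNC.subset (Finset.subset_insert a G) hnc
      have ihG : (RSet G).card = 2 * G.card := ih hGne hGnc
      set G' := insert a G with hG'
      -- restriction map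
      have hmap : ∀ S ∈ RSet G', S.erase a ∈ RSet G := by
        intro S hS
        rw [mem_RSet] at hS ⊢
        obtain ⟨hsub, u, hu⟩ := hS
        refine ⟨?_, u, ?_⟩
        · intro x hx
          rw [Finset.mem_erase] at hx
          rcases Finset.mem_insert.1 (hsub hx.2) with h | h
          · exact absurd h hx.1
          · exact h
        · intro g hg
          have hga : g ≠ a := fun hc => ha (hc ▸ hg)
          have := hu g (Finset.mem_insert_of_mem hg)
          constructor
          · intro hmem; exact this.1 (Finset.mem_of_mem_erase hmem)
          · intro hmem
            exact this.2 (fun hc => hmem (Finset.mem_erase.2 ⟨hga, hc⟩))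
      -- elements of RSet G do not contain a, elements contain subsets of G etc.
      have hanotinT : ∀ T ∈ RSet G, a ∉ T := by
        intro T hT hc
        exact ha ((mem_RSet.1 hT).1 hc)
      -- claim A: every fiber is nonempty
      have claimA : ∀ T ∈ RSet G, T ∈ RSet G' ∨ insert a T ∈ RSet G' := by
        intro T hT
        obtain ⟨hTsub, u, hu⟩ := mem_RSet.1 hT
        have haT : a ∉ T := fun hc => ha (hTsub hc)
        -- helper to build membership given sign of ⟪u', a⟫
        have buildNeg : ∀ u' : E2, Rzs G u' T → ⟪u', a⟫ < 0 → T ∈ RSet G' := by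
          intro u' hu' hneg
          rw [mem_RSet]
          refine ⟨hTsub.trans (Finset.subset_insert a G), u', fun g hg => ?_⟩
          rcases Finset.mem_insert.1 hg with rfl | hgG
          · exact ⟨fun hc => absurd hc haT, fun _ => hneg⟩
          · exact hu' g hgG
        have buildPos : ∀ u' : E2, Rzs G u' T → 0 < ⟪u', a⟫ → insert a T ∈ RSet G' := by
          intro u' hu' hpos
          rw [mem_RSet]
          refine ⟨Finset.insert_subset_insert a hTsub, u', fun g hg => ?_⟩
          rcases Finset.mem_insert.1 hg with rfl | hgG
          · exact ⟨fun _ => hpos, fun hc => absurd (Finset.mem_insert_self _ _) hc⟩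
          · have hga : g ≠ a := fun hc => ha (hc ▸ hgG)
            have := hu' g hgG
            constructor
            · intro hmem
              exact this.1 ((Finset.mem_insert.1 hmem).resolve_left hga)
            · intro hmem
              exact this.2 (fun hc => hmem (Finset.mem_insert_of_mem hc))
        rcases lt_trichotomy (⟪u, a⟫ : ℝ) 0 with hlt | heq | hgt
        · exact Or.inl (buildNeg u hu hlt)
        · obtain ⟨ε, hε, hpert⟩ := rzs_perturb hu a
          refine Or.inl (buildNeg (u + (-ε) • a) (hpert (-ε) (by rw [abs_neg, abs_of_pos hε]))
            ?_)
          rw [inner_add_left, real_inner_smul_left, heq, zero_add]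
          have : (0:ℝ) < ⟪a, a⟫ := inner_self_pos' haz
          nlinarith
        · exact Or.inr (buildPos u hu hgt)
      -- the set of doubly-extendable sign sets
      set D := (RSet G).filter
        (fun T => T ∈ RSet G' ∧ insert a T ∈ RSet G') with hD
      -- fiber cardinality
      have fiber_card : ∀ T ∈ RSet G,
          ((RSet G').filter (fun S => S.erase a = T)).card
            = 1 + (if T ∈ D then 1 else 0) := by
        intro T hT
        have haT : a ∉ T := hanotinT T hT
        have hTne : T ≠ insert a T := fun hc => haT (hc ▸ Finset.mem_insert_self a T)
        have hfib : (RSet G').filter (fun S => S.erase a = T)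
            = ({T, insert a T} : Finset (Finset E2)).filter (fun S => S ∈ RSet G') := by
          apply Finset.ext
          intro S
          simp only [Finset.mem_filter, Finset.mem_insert, Finset.mem_singleton]
          constructor
          · rintro ⟨hS, hSe⟩
            refine ⟨?_, hS⟩
            by_cases haS : a ∈ S
            · right
              rw [← hSe, Finset.insert_erase haS]
            · left
              rw [← hSe, Finset.erase_eq_of_notMem haS]
          · rintro ⟨(rfl | rfl), hS⟩
            · exact ⟨hS, Finset.erase_eq_of_notMem haT⟩
            · exact ⟨hS, Finset.erase_insert haT⟩
        rw [hfib]
        have hDmem : T ∈ D ↔ (T ∈ RSet G' ∧ insert a T ∈ RSet G') := by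
          rw [hD, Finset.mem_filter]
          exact ⟨fun h => h.2, fun h => ⟨hT, h⟩⟩
        by_cases h1 : T ∈ RSet G' <;> by_cases h2 : insert a T ∈ RSet G'
        · rw [if_pos (hDmem.2 ⟨h1, h2⟩)]
          rw [Finset.filter_insert, if_pos h1, Finset.filter_singleton, if_pos h2]
          rw [Finset.card_insert_of_notMem (by simpa using hTne), Finset.card_singleton]
        · rw [if_neg (fun hc => h2 (hDmem.1 hc).2)]
          rw [Finset.filter_insert, if_pos h1, Finset.filter_singleton, if_neg h2]
          simp
        · rw [if_neg (fun hc => h1 (hDmem.1 hc).1)]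
          rw [Finset.filter_insert, if_neg h1, Finset.filter_singleton, if_pos h2]
          simp
        · rcases claimA T hT with hc | hc
          · exact absurd hc h1
          · exact absurd hc h2
      -- identify D
      set u₀ := rot a with hu₀def
      have hu₀a : ⟪u₀, a⟫ = 0 := inner_rot_self a
      have hu₀ : u₀ ≠ 0 := rot_ne_zero haz
      have hu₀G : ∀ g ∈ G, ⟪u₀, g⟫ ≠ 0 := by
        intro g hg hc
        obtain ⟨c, hcg⟩ := collinear_of_perp hu₀ haz hu₀a hc
        exact hnc.2 a (Finset.mem_insert_self a G) g (Finset.mem_insert_of_mem hg)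
          (fun he => ha (he ▸ hg)) c hcg
      set T₀ := G.filter (fun g => 0 < ⟪u₀, g⟫) with hT₀def
      have hRz₀ : Rzs G u₀ T₀ := by
        intro g hg
        constructor
        · intro hmem; exact (Finset.mem_filter.1 hmem).2
        · intro hmem
          have : ¬ (0 < ⟪u₀, g⟫) := fun hc => hmem (Finset.mem_filter.2 ⟨hg, hc⟩)
          rcases lt_or_eq_of_le (not_lt.1 this) with h | h
          · exact h
          · exact absurd h (hu₀G g hg)
      have hRz₀' : Rzs G (-u₀) (G \ T₀) := by
        intro g hg
        constructor
        · intro hmem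
          have h1 : ¬ (0 < ⟪u₀, g⟫) := fun hc =>
            (Finset.mem_sdiff.1 hmem).2 (Finset.mem_filter.2 ⟨hg, hc⟩)
          have h2 : ⟪u₀, g⟫ < 0 := by
            rcases lt_or_eq_of_le (not_lt.1 h1) with h | h
            · exact h
            · exact absurd h (hu₀G g hg)
          rw [inner_neg_left]; linarith
        · intro hmem
          have h1 : g ∈ T₀ := by
            by_contra hc
            exact hmem (Finset.mem_sdiff.2 ⟨hg, hc⟩)
          have := (Finset.mem_filter.1 h1).2
          rw [inner_neg_left]; linarith
      -- both-realizability from a perpendicular realizer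
      have hboth : ∀ w T, Rzs G w T → T ⊆ G → ⟪w, a⟫ = 0 →
          (T ∈ RSet G' ∧ insert a T ∈ RSet G') := by
        intro w T hw hTsub hwa
        have haT : a ∉ T := fun hc => ha (hTsub hc)
        obtain ⟨ε, hε, hpert⟩ := rzs_perturb hw a
        have hAA : (0:ℝ) < ⟪a, a⟫ := inner_self_pos' haz
        constructor
        · rw [mem_RSet]
          refine ⟨hTsub.trans (Finset.subset_insert a G),
            w + (-ε) • a, fun g hg => ?_⟩
          rcases Finset.mem_insert.1 hg with rfl | hgG
          · refine ⟨fun hc => absurd hc haT, fun _ => ?_⟩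
            rw [inner_add_left, real_inner_smul_left, hwa, zero_add]
            nlinarith
          · exact hpert (-ε) (by rw [abs_neg, abs_of_pos hε]) g hgG
        · rw [mem_RSet]
          refine ⟨Finset.insert_subset_insert a hTsub, w + ε • a, fun g hg => ?_⟩
          rcases Finset.mem_insert.1 hg with rfl | hgG
          · refine ⟨fun _ => ?_, fun hc => absurd (Finset.mem_insert_self _ _) hc⟩
            rw [inner_add_left, real_inner_smul_left, hwa, zero_add]
            nlinarith
          · have hga : g ≠ a := fun hc => ha (hc ▸ hgG)
            have := hpert ε (le_of_eq (abs_of_pos hε)) g hgG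
            constructor
            · intro hmem
              exact this.1 ((Finset.mem_insert.1 hmem).resolve_left hga)
            · intro hmem
              exact this.2 (fun hc => hmem (Finset.mem_insert_of_mem hc))
      -- D = {T₀, G \ T₀}
      have hDeq : D = {T₀, G \ T₀} := by
        apply Finset.ext
        intro T
        simp only [hD, Finset.mem_filter, Finset.mem_insert, Finset.mem_singleton]
        constructor
        · rintro ⟨hTR, hT1, hT2⟩
          obtain ⟨hTsub, -⟩ := mem_RSet.1 hTR
          have haT : a ∉ T := fun hc => ha (hTsub hc)
          -- extract u with negative inner product at a
          obtain ⟨-, u, hu⟩ := mem_RSet.1 hT1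
          have huneg : ⟪u, a⟫ < 0 := (hu a (Finset.mem_insert_self a G)).2 haT
          have huG : Rzs G u T := fun g hg => hu g (Finset.mem_insert_of_mem hg)
          obtain ⟨-, u', hu'⟩ := mem_RSet.1 hT2
          have hupos : 0 < ⟪u', a⟫ :=
            (hu' a (Finset.mem_insert_self a G)).1 (Finset.mem_insert_self a T)
          have huG' : Rzs G u' T := by
            intro g hg
            have hga : g ≠ a := fun hc => ha (hc ▸ hg)
            have := hu' g (Finset.mem_insert_of_mem hg)
            constructor
            · intro hmem; exact this.1 (Finset.mem_insert_of_mem hmem)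
            · intro hmem
              exact this.2 (fun hc => hmem ((Finset.mem_insert.1 hc).resolve_left hga))
          -- build perpendicular realizer
          set w : E2 := ⟪u', a⟫ • u + (-⟪u, a⟫) • u' with hwdef
          have hwa : ⟪w, a⟫ = 0 := by
            rw [hwdef, inner_add_left, real_inner_smul_left, real_inner_smul_left]
            ring
          have hwRz : Rzs G w T := by
            intro g hg
            have h1 := huG g hg
            have h2 := huG' g hg
            constructor
            · intro hmem
              have p1 := h1.1 hmem
              have p2 := h2.1 hmem
              rw [hwdef, inner_add_left, real_inner_smul_left, real_inner_smul_left]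
              nlinarith
            · intro hmem
              have p1 := h1.2 hmem
              have p2 := h2.2 hmem
              rw [hwdef, inner_add_left, real_inner_smul_left, real_inner_smul_left]
              nlinarith
          have hwne : w ≠ 0 := by
            intro hc
            obtain ⟨g₁, hg₁⟩ := hGne
            have := hwRz g₁ hg₁
            by_cases hmem : g₁ ∈ T
            · have := this.1 hmem
              rw [hc, inner_zero_left] at this
              exact lt_irrefl 0 this
            · have := this.2 hmem
              rw [hc, inner_zero_left] at this
              exact lt_irrefl 0 this
          have hwu : ⟪a, w⟫ = 0 := by rw [real_inner_comm]; exact hwa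
          have hau : ⟪a, u₀⟫ = 0 := by rw [real_inner_comm]; exact hu₀a
          obtain ⟨c, hcw⟩ := collinear_of_perp haz hu₀ hau hwu
          have hcne : c ≠ 0 := by
            intro hc0
            rw [hc0, zero_smul] at hcw
            exact hwne hcw
          have hinnerw : ∀ g : E2, ⟪w, g⟫ = c * ⟪u₀, g⟫ := by
            intro g
            rw [hcw, real_inner_smul_left]
          rcases lt_or_gt_of_ne hcne with hcneg | hcpos
          · right
            apply Finset.ext
            intro g
            rw [Finset.mem_sdiff, hT₀def, Finset.mem_filter]
            constructor
            · intro hgT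
              have hgG : g ∈ G := hTsub hgT
              have := (hwRz g hgG).1 hgT
              rw [hinnerw] at this
              refine ⟨hgG, fun hcc => ?_⟩
              nlinarith [hcc.2]
            · rintro ⟨hgG, hnpos⟩
              by_contra hgT
              have := (hwRz g hgG).2 hgT
              rw [hinnerw] at this
              have hneg : ⟪u₀, g⟫ < 0 := by
                rcases lt_or_eq_of_le (not_lt.1 (fun hc => hnpos ⟨hgG, hc⟩)) with h | h
                · exact h
                · exact absurd h (hu₀G g hgG)
              nlinarith
          · left
            apply Finset.ext
            intro g
            rw [hT₀def, Finset.mem_filter]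
            constructor
            · intro hgT
              have hgG : g ∈ T₀ → True := fun _ => trivial
              have hgG' : g ∈ G := hTsub hgT
              have := (hwRz g hgG').1 hgT
              rw [hinnerw] at this
              exact ⟨hgG', by nlinarith⟩
            · rintro ⟨hgG, hpos⟩
              by_contra hgT
              have := (hwRz g hgG).2 hgT
              rw [hinnerw] at this
              nlinarith
        · have hT₀sub : T₀ ⊆ G := Finset.filter_subset _ _
          have hT₀R : T₀ ∈ RSet G := mem_RSet.2 ⟨hT₀sub, u₀, hRz₀⟩
          have hT₀R' : (G \ T₀) ∈ RSet G :=
            mem_RSet.2 ⟨Finset.sdiff_subset, -u₀, hRz₀'⟩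
          rintro (rfl | rfl)
          · exact ⟨hT₀R, hboth u₀ T₀ hRz₀ hT₀sub hu₀a⟩
          · refine ⟨hT₀R', hboth (-u₀) (G \ T₀) hRz₀' Finset.sdiff_subset ?_⟩
            rw [inner_neg_left, hu₀a, neg_zero]
      have hDcard : D.card = 2 := by
        rw [hDeq]
        have hne' : T₀ ≠ G \ T₀ := by
          obtain ⟨g₁, hg₁⟩ := hGne
          intro hc
          by_cases hmem : g₁ ∈ T₀
          · have : g₁ ∈ G \ T₀ := hc ▸ hmem
            exact (Finset.mem_sdiff.1 this).2 hmem
          · have : g₁ ∈ G \ T₀ := Finset.mem_sdiff.2 ⟨hg₁, hmem⟩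
            rw [← hc] at this
            exact hmem this
        rw [Finset.card_insert_of_notMem (by simpa using hne'), Finset.card_singleton]
      -- assemble
      have hsum := Finset.card_eq_sum_card_fiberwise hmap
      rw [hsum]
      have : ∑ T ∈ RSet G, ((RSet G').filter (fun S => S.erase a = T)).card
          = ∑ T ∈ RSet G, (1 + (if T ∈ D then 1 else 0)) :=
        Finset.sum_congr rfl fiber_card
      rw [this, Finset.sum_add_distrib, Finset.sum_const, smul_eq_mul, mul_one]
      have hDsub : D ⊆ RSet G := Finset.filter_subset _ _
      have : ∑ T ∈ RSet G, (if T ∈ D then 1 else 0) = D.card := by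
        rw [Finset.sum_ite_mem, Finset.inter_eq_right.2 hDsub, Finset.card_eq_sum_ones]
      rw [this, hDcard, ihG, Finset.card_insert_of_notMem ha]
      ring

def zonotope' {E : Type*} [NormedAddCommGroup E] [InnerProductSpace ℝ E] (G : Finset E) : Set E :=
  ∑ g ∈ G, segment ℝ (0 : E) g

def vtx (S : Finset E2) : E2 := ∑ g ∈ S, g

lemma mem_zonotope_iff {G : Finset E2} {x : E2} :
    x ∈ zonotope' G ↔
      ∃ t : E2 → ℝ, (∀ g ∈ G, t g ∈ Set.Icc (0:ℝ) 1) ∧ x = ∑ g ∈ G, t g • g := by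
  rw [zonotope', Set.mem_finset_sum]
  constructor
  · rintro ⟨f, hf, hsum⟩
    set t : E2 → ℝ := fun g => if h : ∃ r ∈ Set.Icc (0:ℝ) 1, r • g = f g then h.choose else 0
      with htdef
    have ht : ∀ g ∈ G, (∃ r ∈ Set.Icc (0:ℝ) 1, r • g = f g) := by
      intro g hg
      have := hf hg
      rw [segment_eq_image] at this
      obtain ⟨θ, hθ, hθeq⟩ := this
      exact ⟨θ, hθ, by simpa using hθeq⟩
    refine ⟨t, fun g hg => ?_, ?_⟩
    · rw [htdef]
      simp only [dif_pos (ht g hg)]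
      exact (ht g hg).choose_spec.1
    · rw [← hsum]
      apply Finset.sum_congr rfl
      intro g hg
      rw [htdef]
      simp only [dif_pos (ht g hg)]
      exact ((ht g hg).choose_spec.2).symm ▸ (ht g hg).choose_spec.2
  · rintro ⟨t, ht, rfl⟩
    refine ⟨fun g => t g • g, fun {g} hg => ?_, rfl⟩
    rw [segment_eq_image]
    exact ⟨t g, ht g hg, by simp⟩

lemma vtx_mem {G S : Finset E2} (hsub : S ⊆ G) : vtx S ∈ zonotope' G := by
  rw [mem_zonotope_iff]
  refine ⟨fun g => if g ∈ S then 1 else 0, fun g _ => ?_, ?_⟩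
  · by_cases hg : g ∈ S <;> simp [hg]
  · rw [vtx]
    rw [show ∑ g ∈ G, (if g ∈ S then (1:ℝ) else 0) • g
        = ∑ g ∈ G, (if g ∈ S then g else 0) from
      Finset.sum_congr rfl (fun g _ => by by_cases hg : g ∈ S <;> simp [hg])]
    rw [Finset.sum_ite_mem, Finset.inter_eq_right.2 hsub]

lemma le_inner_vtx {G S : Finset E2} {u : E2} (hsub : S ⊆ G) (hu : Rzs G u S) :
    ∀ x ∈ zonotope' G, ⟪u, x⟫ ≤ ⟪u, vtx S⟫ ∧ (⟪u, x⟫ = ⟪u, vtx S⟫ → x = vtx S) := by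
  intro x hx
  obtain ⟨t, ht, rfl⟩ := mem_zonotope_iff.1 hx
  have hsx : ⟪u, ∑ g ∈ G, t g • g⟫ = ∑ g ∈ G, t g * ⟪u, g⟫ := by
    rw [inner_sum]
    exact Finset.sum_congr rfl (fun g _ => real_inner_smul_right u g (t g))
  have hsv : ⟪u, vtx S⟫ = ∑ g ∈ G, (if g ∈ S then ⟪u, g⟫ else 0) := by
    rw [vtx, inner_sum, Finset.sum_ite_mem, Finset.inter_eq_right.2 hsub]
  have hterm : ∀ g ∈ G, t g * ⟪u, g⟫ ≤ (if g ∈ S then ⟪u, g⟫ else 0) := by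
    intro g hg
    rcases hu g hg with ⟨h1, h2⟩
    by_cases hgS : g ∈ S
    · rw [if_pos hgS]
      have := h1 hgS
      have h01 := ht g hg
      nlinarith [h01.1, h01.2]
    · rw [if_neg hgS]
      have := h2 hgS
      have h01 := ht g hg
      nlinarith [h01.1]
  constructor
  · rw [hsx, hsv]
    exact Finset.sum_le_sum hterm
  · intro heq
    rw [hsx, hsv] at heq
    have hall := (Finset.sum_eq_sum_iff_of_le hterm).1 heq
    apply Finset.sum_congr rfl at hall
    have : ∀ g ∈ G, t g • g = (if g ∈ S then g else 0) := by
      intro g hg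
      have he := (Finset.sum_eq_sum_iff_of_le hterm).1 heq g hg
      rcases hu g hg with ⟨h1, h2⟩
      by_cases hgS : g ∈ S
      · rw [if_pos hgS] at he ⊢
        have hne : ⟪u, g⟫ ≠ 0 := ne_of_gt (h1 hgS)
        have : t g = 1 := by
          have h1m : t g * ⟪u, g⟫ = 1 * ⟪u, g⟫ := by rw [one_mul]; exact he
          exact mul_right_cancel₀ hne h1m
        rw [this, one_smul]
      · rw [if_neg hgS] at he ⊢
        have hne : ⟪u, g⟫ ≠ 0 := ne_of_lt (h2 hgS)
        have : t g = 0 := by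
          rcases mul_eq_zero.1 he with h | h
          · exact h
          · exact absurd h hne
        rw [this, zero_smul]
    rw [Finset.sum_congr rfl this, Finset.sum_ite_mem, Finset.inter_eq_right.2 hsub, vtx]

lemma vtx_extreme {G S : Finset E2} (hS : S ∈ RSet G) :
    vtx S ∈ Set.extremePoints ℝ (zonotope' G) := by
  obtain ⟨hsub, u, hu⟩ := mem_RSet.1 hS
  rw [mem_extremePoints]
  refine ⟨vtx_mem hsub, fun x₁ hx₁ x₂ hx₂ hseg => ?_⟩
  obtain ⟨α, β, hα, hβ, hαβ, hsum⟩ := hseg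
  have k1 := le_inner_vtx hsub hu x₁ hx₁
  have k2 := le_inner_vtx hsub hu x₂ hx₂
  have hinner : α * ⟪u, x₁⟫ + β * ⟪u, x₂⟫ = ⟪u, vtx S⟫ := by
    rw [← hsum, inner_add_right, real_inner_smul_right, real_inner_smul_right]
  have hM : α * ⟪u, vtx S⟫ + β * ⟪u, vtx S⟫ = ⟪u, vtx S⟫ := by
    rw [← add_mul, hαβ, one_mul]
  have e1 : ⟪u, x₁⟫ = ⟪u, vtx S⟫ := by
    rcases eq_or_lt_of_le k1.1 with h | h
    · exact h
    · exfalso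
      have h2 : β * ⟪u, x₂⟫ ≤ β * ⟪u, vtx S⟫ := mul_le_mul_of_nonneg_left k2.1 hβ.le
      have h1 : α * ⟪u, x₁⟫ < α * ⟪u, vtx S⟫ := mul_lt_mul_of_pos_left h hα
      linarith
  have e2 : ⟪u, x₂⟫ = ⟪u, vtx S⟫ := by
    rcases eq_or_lt_of_le k2.1 with h | h
    · exact h
    · exfalso
      have h1 : α * ⟪u, x₁⟫ ≤ α * ⟪u, vtx S⟫ := mul_le_mul_of_nonneg_left k1.1 hα.le
      have h2 : β * ⟪u, x₂⟫ < β * ⟪u, vtx S⟫ := mul_lt_mul_of_pos_left h hβ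
      linarith
  exact ⟨k1.2 e1, k2.2 e2⟩

lemma sum_update_smul (G : Finset E2) (t : E2 → ℝ) {g : E2} (hg : g ∈ G) (r : ℝ) :
    ∑ g' ∈ G, (Function.update t g r g') • g'
      = (∑ g' ∈ G, t g' • g') + (r - t g) • g := by
  rw [← Finset.sum_erase_add G _ hg, ← Finset.sum_erase_add G (fun g' => t g' • g') hg]
  have : ∑ g' ∈ G.erase g, (Function.update t g r g') • g'
      = ∑ g' ∈ G.erase g, t g' • g' := by
    apply Finset.sum_congr rfl
    intro g' hg'
    rw [Function.update_of_ne (Finset.mem_erase.1 hg').1]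
  rw [this, Function.update_self, sub_smul]
  abel

set_option maxHeartbeats 2000000 in
lemma extreme_rep {G : Finset E2} (hnc : PNC G) {x : E2}
    (hx : x ∈ Set.extremePoints ℝ (zonotope' G)) :
    ∃ S ∈ RSet G, x = vtx S := by
  obtain ⟨hxZ, hext⟩ := hx
  obtain ⟨t, ht, hxeq⟩ := mem_zonotope_iff.1 hxZ
  -- dichotomy
  have hdi : ∀ g ∈ G, t g = 0 ∨ t g = 1 := by
    intro g hg
    by_contra hc
    push_neg at hc
    obtain ⟨h0, h1⟩ := hc
    have hIcc := ht g hg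
    have ht0 : 0 < t g := lt_of_le_of_ne hIcc.1 (Ne.symm h0)
    have ht1 : t g < 1 := lt_of_le_of_ne hIcc.2 h1
    have hgz : g ≠ 0 := hnc.1 g hg
    set x₁ := x - t g • g with hx₁def
    set x₂ := x + (1 - t g) • g with hx₂def
    have hx₁Z : x₁ ∈ zonotope' G := by
      rw [mem_zonotope_iff]
      refine ⟨Function.update t g 0, fun g' hg' => ?_, ?_⟩
      · by_cases hgg : g' = g
        · subst hgg; rw [Function.update_self]; exact ⟨le_refl 0, zero_le_one⟩
        · rw [Function.update_of_ne hgg]; exact ht g' hg'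
      · rw [sum_update_smul G t hg 0, ← hxeq, hx₁def, zero_sub, neg_smul]
        abel
    have hx₂Z : x₂ ∈ zonotope' G := by
      rw [mem_zonotope_iff]
      refine ⟨Function.update t g 1, fun g' hg' => ?_, ?_⟩
      · by_cases hgg : g' = g
        · subst hgg; rw [Function.update_self]; exact ⟨zero_le_one, le_refl 1⟩
        · rw [Function.update_of_ne hgg]; exact ht g' hg'
      · rw [sum_update_smul G t hg 1, ← hxeq, hx₂def]
    have hseg : x ∈ openSegment ℝ x₁ x₂ := by
      refine ⟨1 - t g, t g, by linarith, ht0, by ring, ?_⟩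
      rw [hx₁def, hx₂def]
      module
    have := hext hx₁Z hx₂Z hseg
    rw [hx₁def] at this
    have : t g • g = 0 := by
      have := sub_eq_self.1 this
      exact this
    rcases smul_eq_zero.1 this with h | h
    · exact absurd h (ne_of_gt ht0)
    · exact hgz h
  set S := G.filter (fun g => t g = 1) with hSdef
  have hsub : S ⊆ G := Finset.filter_subset _ _
  have hxv : x = vtx S := by
    rw [vtx, hxeq, Finset.sum_filter]
    apply Finset.sum_congr rfl
    intro g hg
    rcases hdi g hg with h | h
    · rw [if_neg (by rw [h]; norm_num), h, zero_smul]
    · rw [if_pos h, h, one_smul]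
  -- t-values on S and off S
  have htS : ∀ g ∈ S, t g = 1 := fun g hg => (Finset.mem_filter.1 hg).2
  have htS' : ∀ g ∈ G, g ∉ S → t g = 0 := by
    intro g hg hgS
    rcases hdi g hg with h | h
    · exact h
    · exact absurd (Finset.mem_filter.2 ⟨hg, h⟩) hgS
  -- the translated generator set
  set A : Finset E2 := S.image (fun g => -g) ∪ (G \ S) with hAdef
  have hmemA : ∀ g ∈ S, -g ∈ A := by
    intro g hg
    exact Finset.mem_union_left _ (Finset.mem_image_of_mem _ hg)
  have hmemA' : ∀ g ∈ G, g ∉ S → g ∈ A := by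
    intro g hg hgS
    exact Finset.mem_union_right _ (Finset.mem_sdiff.2 ⟨hg, hgS⟩)
  have hdisj : Disjoint (S.image (fun g => -g)) (G \ S) := by
    rw [Finset.disjoint_left]
    rintro y hy hy'
    obtain ⟨g, hgS, rfl⟩ := Finset.mem_image.1 hy
    obtain ⟨hyG, hyS⟩ := Finset.mem_sdiff.1 hy'
    have hgG : g ∈ G := hsub hgS
    by_cases hgy : g = -g
    · apply hnc.1 g hgG
      have h2 : g + g = 0 := by nth_rewrite 2 [hgy]; abel
      have : (2:ℝ) • g = 0 := by rw [two_smul]; exact h2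
      exact (smul_eq_zero.1 this).resolve_left (by norm_num)
    · exact hnc.2 g hgG (-g) hyG hgy (-1) (by rw [neg_one_smul])
  have hneginj : Set.InjOn (fun g : E2 => -g) S := fun a _ b _ hab => neg_injective hab
  -- 0 is not in the convex hull of A
  have h0A : (0 : E2) ∉ convexHull ℝ (A : Set E2) := by
    intro h0
    rw [Finset.convexHull_eq] at h0
    obtain ⟨w, hw0, hw1, hcm⟩ := h0
    rw [Finset.centerMass_eq_of_sum_1 _ id hw1] at hcm
    simp only [id_eq] at hcm
    set ν : E2 → ℝ := fun g => if g ∈ S then w (-g) else w g with hνdef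
    set ε : E2 → ℝ := fun g => if g ∈ S then (-1:ℝ) else 1 with hεdef
    have hsplitsum : ∀ f : E2 → E2,
        ∑ y ∈ A, f y = ∑ g ∈ S, f (-g) + ∑ g ∈ G \ S, f g := by
      intro f
      rw [hAdef, Finset.sum_union hdisj, Finset.sum_image (fun a ha b hb h => hneginj ha hb h)]
    have hsplitsumR : ∀ f : E2 → ℝ,
        ∑ y ∈ A, f y = ∑ g ∈ S, f (-g) + ∑ g ∈ G \ S, f g := by
      intro f
      rw [hAdef, Finset.sum_union hdisj, Finset.sum_image (fun a ha b hb h => hneginj ha hb h)]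
    have key1 : ∑ g ∈ G, (ν g * ε g) • g = 0 := by
      rw [← Finset.sum_sdiff hsub]
      have e1 : ∑ g ∈ G \ S, (ν g * ε g) • g = ∑ g ∈ G \ S, w g • g := by
        apply Finset.sum_congr rfl
        intro g hg
        have hgS := (Finset.mem_sdiff.1 hg).2
        rw [hνdef, hεdef]
        simp only [if_neg hgS]
        rw [mul_one]
      have e2 : ∑ g ∈ S, (ν g * ε g) • g = ∑ g ∈ S, w (-g) • (-g) := by
        apply Finset.sum_congr rfl
        intro g hg
        rw [hνdef, hεdef]
        simp only [if_pos hg]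
        rw [mul_neg_one, neg_smul, smul_neg]
      rw [e1, e2, add_comm, ← hsplitsum (fun y => w y • y)]
      exact hcm
    have key2 : ∑ g ∈ G, ν g = 1 := by
      rw [← Finset.sum_sdiff hsub]
      have e1 : ∑ g ∈ G \ S, ν g = ∑ g ∈ G \ S, w g := by
        apply Finset.sum_congr rfl
        intro g hg
        rw [hνdef]; simp only [if_neg (Finset.mem_sdiff.1 hg).2]
      have e2 : ∑ g ∈ S, ν g = ∑ g ∈ S, w (-g) := by
        apply Finset.sum_congr rfl
        intro g hg
        rw [hνdef]; simp only [if_pos hg]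
      rw [e1, e2, add_comm, ← hsplitsumR w]
      exact hw1
    have hν0 : ∀ g ∈ G, 0 ≤ ν g := by
      intro g hg
      rw [hνdef]
      by_cases hgS : g ∈ S
      · simp only [if_pos hgS]; exact hw0 _ (hmemA g hgS)
      · simp only [if_neg hgS]; exact hw0 _ (hmemA' g hg hgS)
    have hν1 : ∀ g ∈ G, ν g ≤ 1 := by
      intro g hg
      rw [← key2]
      exact Finset.single_le_sum hν0 hg
    have hg₀ : ∃ g₀ ∈ G, 0 < ν g₀ := by
      by_contra hc
      push_neg at hc
      have : ∑ g ∈ G, ν g ≤ 0 := Finset.sum_nonpos hc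
      rw [key2] at this
      linarith
    obtain ⟨g₀, hg₀G, hg₀pos⟩ := hg₀
    have hg₀z : g₀ ≠ 0 := hnc.1 g₀ hg₀G
    set d : E2 := (ν g₀ * ε g₀) • g₀ with hddef
    have hdne : d ≠ 0 := by
      rw [hddef]
      apply smul_ne_zero _ hg₀z
      rw [hεdef]
      by_cases hgS : g₀ ∈ S
      · simp only [if_pos hgS]; intro hc; nlinarith
      · simp only [if_neg hgS]; intro hc; nlinarith
    have hx₁Z : x + d ∈ zonotope' G := by
      rw [mem_zonotope_iff]
      refine ⟨Function.update t g₀ (t g₀ + ν g₀ * ε g₀), fun g' hg' => ?_, ?_⟩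
      · by_cases hgg : g' = g₀
        · rw [hgg, Function.update_self]
          by_cases hgS : g₀ ∈ S
          · rw [htS g₀ hgS, hεdef]
            simp only [if_pos hgS]
            constructor
            · have := hν1 g₀ hg₀G; nlinarith
            · nlinarith
          · rw [htS' g₀ hg₀G hgS, hεdef]
            simp only [if_neg hgS]
            constructor
            · nlinarith
            · have := hν1 g₀ hg₀G; nlinarith
        · rw [Function.update_of_ne hgg]; exact ht g' hg'
      · rw [sum_update_smul G t hg₀G _, ← hxeq, hddef]
        congr 1
        rw [add_sub_cancel_left]
    have hx₂Z : x - d ∈ zonotope' G := by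
      rw [mem_zonotope_iff]
      refine ⟨fun g => t g + (if g = g₀ then 0 else ν g * ε g), fun g' hg' => ?_, ?_⟩
      · by_cases hgg : g' = g₀
        · simp only [if_pos hgg, add_zero]; exact ht g' hg'
        · simp only [if_neg hgg]
          by_cases hgS : g' ∈ S
          · rw [htS g' hgS, hεdef]
            simp only [if_pos hgS]
            have h1 := hν0 g' hg'
            have h2 := hν1 g' hg'
            constructor
            · nlinarith
            · nlinarith
          · rw [htS' g' hg' hgS, hεdef]
            simp only [if_neg hgS]
            have h1 := hν0 g' hg'
            have h2 := hν1 g' hg'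
            constructor
            · nlinarith
            · nlinarith
      · have hsplit : ∑ g ∈ G, (t g + (if g = g₀ then 0 else ν g * ε g)) • g
            = ∑ g ∈ G, t g • g + ∑ g ∈ G, (if g = g₀ then 0 else ν g * ε g) • g := by
          rw [← Finset.sum_add_distrib]
          apply Finset.sum_congr rfl
          intro g hg
          rw [add_smul]
        have hrest : ∑ g ∈ G, (if g = g₀ then (0:ℝ) else ν g * ε g) • g = -d := by
          have h1 : ∑ g ∈ G, (if g = g₀ then (0:ℝ) else ν g * ε g) • g
              = ∑ g ∈ G.erase g₀, (ν g * ε g) • g := by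
            rw [← Finset.sum_subset (Finset.erase_subset g₀ G)
              (fun g hg hg' => ?_)]
            · apply Finset.sum_congr rfl
              intro g hg
              rw [if_neg (Finset.mem_erase.1 hg).1]
            · have : g = g₀ := by
                by_contra hc
                exact hg' (Finset.mem_erase.2 ⟨hc, hg⟩)
              rw [if_pos this, zero_smul]
          have h2 := Finset.sum_erase_add G (fun g => (ν g * ε g) • g) hg₀G
          rw [key1] at h2
          rw [h1, hddef]
          have := eq_neg_of_add_eq_zero_left h2
          exact this
        rw [hsplit, hrest, ← hxeq]
        abel
    have hseg : x ∈ openSegment ℝ (x + d) (x - d) := by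
      refine ⟨1/2, 1/2, by norm_num, by norm_num, by norm_num, by module⟩
    have := hext hx₁Z hx₂Z hseg
    exact hdne (add_eq_left.1 this)
  -- separation
  have hclosed : IsClosed (convexHull ℝ (A : Set E2)) :=
    (A.finite_toSet).isClosed_convexHull (𝕜 := ℝ)
  obtain ⟨f, c, hfa, hfc⟩ :=
    geometric_hahn_banach_closed_point (convex_convexHull ℝ _) hclosed h0A
  rw [map_zero] at hfc
  set u : E2 := (InnerProductSpace.toDual ℝ E2).symm f with hudef
  have hinner : ∀ y : E2, ⟪u, y⟫ = f y := fun y => InnerProductSpace.toDual_symm_apply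
  have hRz : Rzs G u S := by
    intro g hg
    constructor
    · intro hgS
      have : f (-g) < c := hfa _ (subset_convexHull ℝ _ (by exact_mod_cast hmemA g hgS))
      have h2 : ⟪u, -g⟫ < 0 := by rw [hinner]; linarith
      rw [inner_neg_right] at h2
      linarith
    · intro hgS
      have : f g < c := hfa _ (subset_convexHull ℝ _ (by exact_mod_cast hmemA' g hg hgS))
      rw [← hinner] at this
      linarith
  exact ⟨S, mem_RSet.2 ⟨hsub, u, hRz⟩, hxv⟩

lemma vtx_injOn {G : Finset E2} :
    ∀ S ∈ RSet G, ∀ T ∈ RSet G, vtx S = vtx T → S = T := by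
  intro S hS T hT heq
  by_contra hne
  obtain ⟨hSsub, u, hu⟩ := mem_RSet.1 hS
  obtain ⟨hTsub, -⟩ := mem_RSet.1 hT
  have hinner : ∀ W : Finset E2, ⟪u, vtx W⟫ = ∑ g ∈ W, ⟪u, g⟫ := by
    intro W; rw [vtx, inner_sum]
  have hdiff : ∑ g ∈ S, ⟪u, g⟫ - ∑ g ∈ T, ⟪u, g⟫ = 0 := by
    rw [← hinner, ← hinner, heq, sub_self]
  rw [← Finset.sum_sdiff_sub_sum_sdiff] at hdiff
  have hSTpos : ∀ g ∈ S \ T, 0 < ⟪u, g⟫ := by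
    intro g hg
    have hgS := (Finset.mem_sdiff.1 hg).1
    exact (hu g (hSsub hgS)).1 hgS
  have hTSneg : ∀ g ∈ T \ S, ⟪u, g⟫ < 0 := by
    intro g hg
    obtain ⟨hgT, hgS⟩ := Finset.mem_sdiff.1 hg
    exact (hu g (hTsub hgT)).2 hgS
  have hone : (S \ T).Nonempty ∨ (T \ S).Nonempty := by
    by_contra hc
    push_neg at hc
    simp only [Finset.not_nonempty_iff_eq_empty, Finset.sdiff_eq_empty_iff_subset] at hc
    exact hne (Finset.Subset.antisymm hc.1 hc.2)
  rcases hone with hh | hh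
  · have h1 : 0 < ∑ g ∈ S \ T, ⟪u, g⟫ := Finset.sum_pos hSTpos hh
    have h2 : ∑ g ∈ T \ S, ⟪u, g⟫ ≤ 0 :=
      Finset.sum_nonpos (fun g hg => le_of_lt (hTSneg g hg))
    linarith
  · have h1 : 0 ≤ ∑ g ∈ S \ T, ⟪u, g⟫ :=
      Finset.sum_nonneg (fun g hg => le_of_lt (hSTpos g hg))
    have h2 : ∑ g ∈ T \ S, ⟪u, g⟫ < 0 := Finset.sum_neg hTSneg hh
    linarith

theorem zonogon_vertex_count' (G : Finset (EuclideanSpace ℝ (Fin 2))) (hG : G.Nonempty)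
    (h : PNC G) :
    (Set.extremePoints ℝ (zonotope' G)).ncard = 2 * G.card := by
  have hchar : Set.extremePoints ℝ (zonotope' G)
      = vtx '' ((RSet G : Finset (Finset E2)) : Set (Finset E2)) := by
    ext x
    constructor
    · intro hx
      obtain ⟨S, hS, hxe⟩ := extreme_rep h hx
      exact ⟨S, by exact_mod_cast hS, hxe.symm⟩
    · rintro ⟨S, hS, rfl⟩
      exact vtx_extreme (by exact_mod_cast hS)
  rw [hchar, Set.ncard_image_of_injOn
    (fun S hS T hT hST => vtx_injOn S (by exact_mod_cast hS) T (by exact_mod_cast hT) hST),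
    Set.ncard_coe_finset, RSet_card G hG h]

theorem zonogon_vertex_count (G : Finset (EuclideanSpace ℝ (Fin 2))) (hG : G.Nonempty)
    (h : PairwiseNoncollinear G) :
    (Set.extremePoints ℝ (zonotope G)).ncard = 2 * G.card := by
  have hz : zonotope G = zonotope' G := rfl
  rw [hz]
  exact zonogon_vertex_count' G hG ⟨h.1, h.2⟩
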